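/- Let k be a number field of degree d := [k:ℚ] with ring of integers 𝒪_k, and let n ≥ 1. Let 𝒜 be a finite subset of 𝒪_kⁿ and B > 0 a real number such that ‖P − Q‖ ≤ B for all P, Q ∈ 𝒜. Let J be a finite set of maximal ideals of 𝒪_k, and for every 𝔭 ∈ J let g_𝔭 ≥ 1 be a real number such that the image of 𝒜 under coordinatewise reduction 𝒪_kⁿ → (𝒪_k/𝔭)ⁿ has cardinality at most g_𝔭. Then |𝒜| ≤ (∑_{𝔭 ∈ J} log N(𝔭) − d·log B) / (∑_{𝔭 ∈ J} (log N(𝔭))/g_𝔭 − d·log B), provided the denominator ∑_{𝔭 ∈ J} (log N(𝔭))/g_𝔭 − d·log B is positive. -/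

import Mathlib

open NumberField Finset

lemma cs_aux {α β : Type*} [DecidableEq α] [DecidableEq β] (s : Finset α) (f : α → β) :
    (s.card : ℝ)^2 ≤ ((s.image f).card : ℝ) *
      (((s ×ˢ s).filter (fun pq : α × α => f pq.1 = f pq.2)).card : ℝ) := by
  classical
  have h1 : s.card = ∑ y ∈ s.image f, (s.filter fun a => f a = y).card :=
    Finset.card_eq_sum_card_fiberwise fun a ha => Finset.mem_image_of_mem f ha
  have h2 : ((s ×ˢ s).filter fun pq : α × α => f pq.1 = f pq.2).card
      = ∑ y ∈ s.image f, ((s.filter fun a => f a = y).card)^2 := by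
    rw [Finset.card_eq_sum_card_fiberwise
      (f := fun pq : α × α => f pq.1) (t := s.image f)
      (fun pq hpq => Finset.mem_image_of_mem f (Finset.mem_product.mp (Finset.mem_filter.mp hpq).1).1)]
    refine Finset.sum_congr rfl fun y hy => ?_
    have he : ((s ×ˢ s).filter fun pq : α × α => f pq.1 = f pq.2).filter
          (fun pq : α × α => f pq.1 = y)
        = (s.filter fun a => f a = y) ×ˢ (s.filter fun a => f a = y) := by
      ext ⟨a, b⟩
      simp only [Finset.mem_filter, Finset.mem_product]
      constructor
      · rintro ⟨⟨⟨ha, hb⟩, hab⟩, hay⟩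
        exact ⟨⟨ha, hay⟩, hb, hab ▸ hay⟩
      · rintro ⟨⟨ha, hay⟩, hb, hby⟩
        exact ⟨⟨⟨ha, hb⟩, hay.trans hby.symm⟩, hay⟩
    rw [he, Finset.card_product, sq]
  have h3 := sq_sum_le_card_mul_sum_sq (s := s.image f)
    (f := fun y => ((s.filter fun a => f a = y).card : ℝ))
  calc (s.card : ℝ)^2 = (∑ y ∈ s.image f, ((s.filter fun a => f a = y).card : ℝ))^2 := by
        rw [h1]; push_cast; ring
    _ ≤ ((s.image f).card : ℝ) * ∑ y ∈ s.image f, ((s.filter fun a => f a = y).card : ℝ)^2 := h3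
    _ = _ := by rw [h2]; push_cast; ring

open scoped Classical in
lemma key_aux (k : Type) [Field k] [NumberField k] (n : ℕ)
    (P Q : Fin n → 𝓞 k) (B : ℝ)
    (hbound : ∀ (σ : k →+* ℂ) (i : Fin n),
      ‖σ ((P i : k) - (Q i : k))‖ ≤ B)
    (J : Finset (Ideal (𝓞 k))) (hJ : ∀ 𝔭 ∈ J, 𝔭.IsMaximal)
    (hPQ : P ≠ Q) :
    ∑ 𝔭 ∈ J.filter (fun 𝔭 =>
        (fun i => Ideal.Quotient.mk 𝔭 (P i)) = (fun i => Ideal.Quotient.mk 𝔭 (Q i))),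
      Real.log (Nat.card (𝓞 k ⧸ 𝔭)) ≤ (Module.finrank ℚ k : ℝ) * Real.log B := by
  classical
  obtain ⟨i, hi⟩ : ∃ i, P i ≠ Q i := by
    by_contra h; push_neg at h; exact hPQ (funext h)
  set x : 𝓞 k := P i - Q i with hxdef
  have hx : x ≠ 0 := sub_ne_zero.mpr hi
  set T := J.filter (fun 𝔭 =>
    (fun i => Ideal.Quotient.mk 𝔭 (P i)) = (fun i => Ideal.Quotient.mk 𝔭 (Q i))) with hT
  have hmem : ∀ 𝔭 ∈ T, x ∈ 𝔭 := by
    intro 𝔭 h𝔭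
    have := (Finset.mem_filter.mp h𝔭).2
    have h2 : Ideal.Quotient.mk 𝔭 (P i) = Ideal.Quotient.mk 𝔭 (Q i) := congrFun this i
    exact Ideal.Quotient.eq.mp h2
  have hprime : ∀ 𝔭 ∈ T, Prime 𝔭 := by
    intro 𝔭 h𝔭
    have hbot : 𝔭 ≠ ⊥ := by
      intro hb
      exact hx (by simpa [hb, Ideal.mem_bot] using hmem 𝔭 h𝔭)
    exact (Ideal.prime_iff_isPrime hbot).mpr (hJ 𝔭 (Finset.mem_of_mem_filter _ h𝔭)).isPrime
  have hdvd : ∏ 𝔭 ∈ T, 𝔭 ∣ Ideal.span {x} :=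
    Finset.prod_primes_dvd _ hprime (fun 𝔭 h𝔭 =>
      Ideal.dvd_iff_le.mpr ((Ideal.span_singleton_le_iff_mem _).mpr (hmem 𝔭 h𝔭)))
  have hNdvd : ∏ 𝔭 ∈ T, Ideal.absNorm 𝔭 ∣ (Algebra.norm ℤ x).natAbs := by
    rw [← Ideal.absNorm_span_singleton, ← map_prod]
    exact map_dvd _ hdvd
  have hnz : (Algebra.norm ℤ x).natAbs ≠ 0 := by
    rw [Int.natAbs_ne_zero]
    intro h0
    have : (Algebra.norm ℚ (x : k)) = 0 := by
      rw [← Algebra.coe_norm_int, h0]; norm_num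
    have : (x : k) = 0 := by
      have := Algebra.norm_eq_zero_iff.mp this
      exact this
    exact hx (by exact_mod_cast RingOfIntegers.coe_eq_zero_iff.mp this)
  -- bound the norm by B ^ d
  have hd : ((|(Algebra.norm ℚ ((x : k)))| : ℚ) : ℝ) ≤ B ^ (Module.finrank ℚ k) := by
    rw [← NumberField.InfinitePlace.prod_eq_abs_norm]
    have hBnn : 0 ≤ B := le_trans (norm_nonneg _) (hbound (Classical.arbitrary _) i)
    calc ∏ w : InfinitePlace k, w (x : k) ^ w.mult
        ≤ ∏ w : InfinitePlace k, B ^ w.mult := by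
          refine Finset.prod_le_prod (fun w _ => by positivity) (fun w _ => ?_)
          refine pow_le_pow_left₀ (apply_nonneg w _) ?_ _
          rw [← InfinitePlace.norm_embedding_eq]
          have hx' : (x : k) = (P i : k) - (Q i : k) := by push_cast [hxdef]; ring
          rw [hx']
          simpa using hbound w.embedding i
      _ = B ^ (Module.finrank ℚ k) := by
          rw [Finset.prod_pow_eq_pow_sum, InfinitePlace.sum_mult_eq]
  -- assemble
  have hprodB : ((∏ 𝔭 ∈ T, Ideal.absNorm 𝔭 : ℕ) : ℝ) ≤ B ^ (Module.finrank ℚ k) := by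
    have hle : ∏ 𝔭 ∈ T, Ideal.absNorm 𝔭 ≤ (Algebra.norm ℤ x).natAbs :=
      Nat.le_of_dvd (Nat.pos_of_ne_zero hnz) hNdvd
    have hq : (((Algebra.norm ℤ x).natAbs : ℕ) : ℚ) = |(Algebra.norm ℚ ((x : k)))| := by
      rw [Nat.cast_natAbs, Int.cast_abs, Algebra.coe_norm_int]
    calc ((∏ 𝔭 ∈ T, Ideal.absNorm 𝔭 : ℕ) : ℝ) ≤ (((Algebra.norm ℤ x).natAbs : ℕ) : ℝ) :=
          Nat.cast_le.mpr hle
      _ = ((|(Algebra.norm ℚ ((x : k)))| : ℚ) : ℝ) := by exact_mod_cast congrArg (fun q : ℚ => (q : ℝ)) hq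
      _ ≤ B ^ (Module.finrank ℚ k) := hd
  have hfac : ∀ 𝔭 ∈ T, Ideal.absNorm 𝔭 ≠ 0 := by
    intro 𝔭 h𝔭
    intro h0
    have hz : ∏ 𝔭 ∈ T, Ideal.absNorm 𝔭 = 0 := Finset.prod_eq_zero h𝔭 h0
    exact hnz (Nat.eq_zero_of_zero_dvd (hz ▸ hNdvd))
  -- convert Nat.card to absNorm and conclude via logs
  have hNa : ∀ 𝔭 : Ideal (𝓞 k), (Nat.card (𝓞 k ⧸ 𝔭)) = Ideal.absNorm 𝔭 := by
    intro 𝔭; rw [Ideal.absNorm_apply, Submodule.cardQuot_apply]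
  have hprodpos : (0:ℝ) < ((∏ 𝔭 ∈ T, Ideal.absNorm 𝔭 : ℕ) : ℝ) := by
    have : ∏ 𝔭 ∈ T, Ideal.absNorm 𝔭 ≠ 0 := Finset.prod_ne_zero_iff.mpr hfac
    exact_mod_cast Nat.pos_of_ne_zero this
  calc ∑ 𝔭 ∈ T, Real.log (Nat.card (𝓞 k ⧸ 𝔭))
      = Real.log ((∏ 𝔭 ∈ T, Ideal.absNorm 𝔭 : ℕ) : ℝ) := by
        push_cast
        rw [Real.log_prod (fun 𝔭 h𝔭 => by exact_mod_cast hfac 𝔭 h𝔭)]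
        exact Finset.sum_congr rfl fun 𝔭 _ => by rw [hNa]
    _ ≤ Real.log (B ^ (Module.finrank ℚ k)) := Real.log_le_log hprodpos hprodB
    _ = (Module.finrank ℚ k : ℝ) * Real.log B := by rw [Real.log_pow]

/-- The larger sieve for integral points of `𝒪_kⁿ` over a number field `k`. -/
theorem stmt_9 (k : Type) [Field k] [NumberField k] (n : ℕ) (hn : 1 ≤ n)
    (𝒜 : Finset (Fin n → 𝓞 k)) (B : ℝ) (hB : 0 < B)
    (hbound : ∀ P ∈ 𝒜, ∀ Q ∈ 𝒜, ∀ (σ : k →+* ℂ) (i : Fin n),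
      ‖σ ((P i : k) - (Q i : k))‖ ≤ B)
    (J : Finset (Ideal (𝓞 k))) (hJ : ∀ 𝔭 ∈ J, 𝔭.IsMaximal)
    (g : Ideal (𝓞 k) → ℝ) (hg1 : ∀ 𝔭 ∈ J, 1 ≤ g 𝔭)
    (hred : ∀ 𝔭 ∈ J,
      (Set.ncard ((fun (P : Fin n → 𝓞 k) (i : Fin n) => Ideal.Quotient.mk 𝔭 (P i)) ''
        (𝒜 : Set (Fin n → 𝓞 k))) : ℝ) ≤ g 𝔭)
    (hden : 0 < (∑ 𝔭 ∈ J, Real.log (Nat.card (𝓞 k ⧸ 𝔭)) / g 𝔭) -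
      (Module.finrank ℚ k : ℝ) * Real.log B) :
    (𝒜.card : ℝ) ≤
      ((∑ 𝔭 ∈ J, Real.log (Nat.card (𝓞 k ⧸ 𝔭))) -
          (Module.finrank ℚ k : ℝ) * Real.log B) /
        ((∑ 𝔭 ∈ J, Real.log (Nat.card (𝓞 k ⧸ 𝔭)) / g 𝔭) -
          (Module.finrank ℚ k : ℝ) * Real.log B) := by
  classical
  rw [le_div_iff₀ hden]
  set D := (Module.finrank ℚ k : ℝ) * Real.log B with hD
  set m := ∑ 𝔭 ∈ J, Real.log (Nat.card (𝓞 k ⧸ 𝔭)) / g 𝔭 with hm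
  set LJ := ∑ 𝔭 ∈ J, Real.log (Nat.card (𝓞 k ⧸ 𝔭)) with hLJ
  have hLnn : ∀ 𝔭 : Ideal (𝓞 k), 0 ≤ Real.log (Nat.card (𝓞 k ⧸ 𝔭)) :=
    fun 𝔭 => Real.log_natCast_nonneg _
  have hmLJ : m ≤ LJ := Finset.sum_le_sum fun 𝔭 h𝔭 => div_le_self (hLnn 𝔭) (hg1 𝔭 h𝔭)
  by_cases hA0 : 𝒜.card = 0
  · rw [hA0]
    push_cast
    nlinarith [hden, hmLJ]
  have hA1 : 1 ≤ 𝒜.card := Nat.one_le_iff_ne_zero.mpr hA0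
  set A := (𝒜.card : ℝ) with hA
  have hA1' : (1:ℝ) ≤ A := by rw [hA]; exact_mod_cast hA1
  have hApos : (0:ℝ) < A := lt_of_lt_of_le one_pos hA1'
  -- the count of matching pairs mod 𝔭
  set c : Ideal (𝓞 k) → ℕ := fun 𝔭 =>
    ((𝒜 ×ˢ 𝒜).filter (fun pq : (Fin n → 𝓞 k) × (Fin n → 𝓞 k) =>
      (fun i => Ideal.Quotient.mk 𝔭 (pq.1 i)) = (fun i => Ideal.Quotient.mk 𝔭 (pq.2 i)))).card
    with hc
  -- Cauchy–Schwarz lower bound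
  have hCS : ∀ 𝔭 ∈ J, A^2 ≤ g 𝔭 * c 𝔭 := by
    intro 𝔭 h𝔭
    have h := cs_aux 𝒜 (fun P (i : Fin n) => Ideal.Quotient.mk 𝔭 (P i))
    have himg : (((𝒜.image (fun P (i : Fin n) => Ideal.Quotient.mk 𝔭 (P i))).card : ℕ) : ℝ)
        ≤ g 𝔭 := by
      have h' := hred 𝔭 h𝔭
      rwa [← Finset.coe_image, Set.ncard_coe_finset] at h'
    calc A^2 ≤ _ := h
      _ ≤ g 𝔭 * c 𝔭 := by
          refine mul_le_mul himg ?_ (Nat.cast_nonneg _) (le_trans ?_ himg)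
          · exact_mod_cast le_of_eq rfl
          · positivity
  -- the weight of a pair
  set w : (Fin n → 𝓞 k) × (Fin n → 𝓞 k) → ℝ := fun pq =>
    ∑ 𝔭 ∈ J.filter (fun 𝔭 =>
        (fun i => Ideal.Quotient.mk 𝔭 (pq.1 i)) = (fun i => Ideal.Quotient.mk 𝔭 (pq.2 i))),
      Real.log (Nat.card (𝓞 k ⧸ 𝔭)) with hw
  -- swap the double sum
  have hswap : ∑ 𝔭 ∈ J, Real.log (Nat.card (𝓞 k ⧸ 𝔭)) * (c 𝔭 : ℝ)
      = ∑ pq ∈ 𝒜 ×ˢ 𝒜, w pq := by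
    calc ∑ 𝔭 ∈ J, Real.log (Nat.card (𝓞 k ⧸ 𝔭)) * (c 𝔭 : ℝ)
        = ∑ 𝔭 ∈ J, ∑ pq ∈ 𝒜 ×ˢ 𝒜,
            (if (fun i => Ideal.Quotient.mk 𝔭 (pq.1 i)) = (fun i => Ideal.Quotient.mk 𝔭 (pq.2 i))
              then Real.log (Nat.card (𝓞 k ⧸ 𝔭)) else 0) := by
          refine Finset.sum_congr rfl fun 𝔭 _ => ?_
          rw [← Finset.sum_filter, Finset.sum_const, nsmul_eq_mul, mul_comm, hc]
      _ = ∑ pq ∈ 𝒜 ×ˢ 𝒜, ∑ 𝔭 ∈ J,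
            (if (fun i => Ideal.Quotient.mk 𝔭 (pq.1 i)) = (fun i => Ideal.Quotient.mk 𝔭 (pq.2 i))
              then Real.log (Nat.card (𝓞 k ⧸ 𝔭)) else 0) := Finset.sum_comm
      _ = ∑ pq ∈ 𝒜 ×ˢ 𝒜, w pq := by
          exact Finset.sum_congr rfl fun pq _ => (Finset.sum_filter _ _).symm
  -- upper bound on the double sum
  have hupper : ∑ pq ∈ 𝒜 ×ˢ 𝒜, w pq ≤ A * LJ + (A^2 - A) * D := by
    rw [Finset.sum_product]
    have hPbound : ∀ P ∈ 𝒜, ∑ Q ∈ 𝒜, w (P, Q) ≤ LJ + (A - 1) * D := by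
      intro P hP
      rw [← Finset.add_sum_erase _ _ hP]
      have h1 : w (P, P) ≤ LJ :=
        Finset.sum_le_sum_of_subset_of_nonneg (Finset.filter_subset _ _)
          (fun 𝔭 _ _ => hLnn 𝔭)
      have h2 : ∑ Q ∈ 𝒜.erase P, w (P, Q) ≤ ((𝒜.erase P).card : ℝ) * D := by
        rw [← nsmul_eq_mul]
        refine Finset.sum_le_card_nsmul _ _ D fun Q hQ => ?_
        have hQP : P ≠ Q := fun h => (Finset.mem_erase.mp hQ).1 h.symm
        exact key_aux k n P Q B (hbound P hP Q (Finset.mem_of_mem_erase hQ)) J hJ hQP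
      have h3 : ((𝒜.erase P).card : ℝ) = A - 1 := by
        rw [Finset.card_erase_of_mem hP, hA, Nat.cast_sub hA1, Nat.cast_one]
      linarith [h2, h3 ▸ h2]
    calc ∑ P ∈ 𝒜, ∑ Q ∈ 𝒜, w (P, Q) ≤ ∑ P ∈ 𝒜, (LJ + (A - 1) * D) :=
          Finset.sum_le_sum hPbound
      _ = A * (LJ + (A - 1) * D) := by rw [Finset.sum_const, nsmul_eq_mul, hA]
      _ = A * LJ + (A^2 - A) * D := by ring
  -- lower bound on the double sum
  have hlower : A^2 * m ≤ ∑ 𝔭 ∈ J, Real.log (Nat.card (𝓞 k ⧸ 𝔭)) * (c 𝔭 : ℝ) := by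
    rw [hm, Finset.mul_sum]
    refine Finset.sum_le_sum fun 𝔭 h𝔭 => ?_
    have hg0 : (0:ℝ) < g 𝔭 := lt_of_lt_of_le one_pos (hg1 𝔭 h𝔭)
    have hdiv : A^2 / g 𝔭 ≤ (c 𝔭 : ℝ) := (div_le_iff₀ hg0).mpr
      (by rw [mul_comm]; exact hCS 𝔭 h𝔭)
    calc A^2 * (Real.log (Nat.card (𝓞 k ⧸ 𝔭)) / g 𝔭)
        = Real.log (Nat.card (𝓞 k ⧸ 𝔭)) * (A^2 / g 𝔭) := by ring
      _ ≤ Real.log (Nat.card (𝓞 k ⧸ 𝔭)) * (c 𝔭 : ℝ) :=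
          mul_le_mul_of_nonneg_left hdiv (hLnn 𝔭)
  have hfinal : A^2 * m ≤ A * LJ + (A^2 - A) * D := by
    calc A^2 * m ≤ _ := hlower
      _ = ∑ pq ∈ 𝒜 ×ˢ 𝒜, w pq := hswap
      _ ≤ A * LJ + (A^2 - A) * D := hupper
  have hmain : A * (A * (m - D)) ≤ A * (LJ - D) := by nlinarith [hfinal]
  exact le_of_mul_le_mul_left hmain hApos
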